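/- Let r^1,...,r^k ∈ Z^n be linearly independent with L = span{r^1,...,r^k}. Then the multiplicity of the projected cone satisfies Δ(r^1|(r^i)^⊥,...,r^{i−1}|(r^i)^⊥, r^{i+1}|(r^i)^⊥,...,r^k|(r^i)^⊥) ≤ Δ(r^1,...,r^k), where the left-hand side is defined with respect to the projected lattice (L ∩ Z^n)|(r^i)^⊥. -/
import Mathlib


open scoped BigOperators

noncomputable section

namespace ICRPaper

/-- A real vector is integral if every coordinate is an integer. -/
def IsIntegral {n : ℕ} (x : Fin n → ℝ) : Prop := ∀ i, ∃ z : ℤ, x i = (z : ℝ)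

/-- The lattice of integer points of `ℝ^n`. -/
def intLattice (n : ℕ) : Set (Fin n → ℝ) := {x | IsIntegral x}

/-- Standard dot product on `ℝ^n`. -/
def dot {n : ℕ} (x y : Fin n → ℝ) : ℝ := ∑ i, x i * y i

/-- `pos r`: the cone of non-negative real combinations of the vectors `r i`. -/
def pos {n : ℕ} {ι : Type} [Fintype ι] (r : ι → (Fin n → ℝ)) : Set (Fin n → ℝ) :=
  {x | ∃ lam : ι → ℝ, (∀ i, 0 ≤ lam i) ∧ x = ∑ i, lam i • r i}

/-- Lattice points (w.r.t. a lattice `Λ`) in the half-open parallelepiped spanned by `r`. -/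
def parL {n : ℕ} {ι : Type} [Fintype ι] (Λ : Set (Fin n → ℝ)) (r : ι → (Fin n → ℝ)) :
    Set (Fin n → ℝ) :=
  {x | (∃ lam : ι → ℝ, (∀ i, 0 ≤ lam i ∧ lam i < 1) ∧ x = ∑ i, lam i • r i) ∧ x ∈ Λ}

/-- Integer points in the half-open parallelepiped spanned by `r`. -/
def par {n : ℕ} {ι : Type} [Fintype ι] (r : ι → (Fin n → ℝ)) : Set (Fin n → ℝ) :=
  parL (intLattice n) r

/-- `h` is a Hilbert basis element of the cone `C` with respect to the lattice `Λ`: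
a nonzero lattice vector of `C` which is not the sum of two nonzero lattice vectors of `C`. -/
def IsHilbertL {n : ℕ} (Λ : Set (Fin n → ℝ)) (C : Set (Fin n → ℝ)) (h : Fin n → ℝ) : Prop :=
  h ∈ C ∧ h ∈ Λ ∧ h ≠ 0 ∧
    ∀ a b : Fin n → ℝ, a ∈ C → b ∈ C → a ∈ Λ → b ∈ Λ → a ≠ 0 → b ≠ 0 → h ≠ a + b

/-- The integer Carathéodory rank of `C` with respect to the lattice `Λ`:
the maximum over lattice points `z ∈ C` of the minimal number of Hilbert basis
elements needed to write `z` as a non-negative integral combination. -/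
def ICRL {n : ℕ} (Λ : Set (Fin n → ℝ)) (C : Set (Fin n → ℝ)) : ℕ :=
  sSup {m : ℕ | ∃ z ∈ C, z ∈ Λ ∧
    m = sInf {k : ℕ | ∃ h : Fin k → (Fin n → ℝ), ∃ c : Fin k → ℕ,
      (∀ i, IsHilbertL Λ C (h i)) ∧ z = ∑ i, (c i : ℝ) • h i}}

/-- The integer Carathéodory rank with respect to the integer lattice `ℤ^n`. -/
def ICR {n : ℕ} (C : Set (Fin n → ℝ)) : ℕ := ICRL (intLattice n) C

/-- The lattice `L ∩ ℤ^n`, where `L` is the real span of the vectors `r i`. -/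
def latticeOf {n : ℕ} {ι : Type} [Fintype ι] (r : ι → (Fin n → ℝ)) : Set (Fin n → ℝ) :=
  {x | x ∈ Submodule.span ℝ (Set.range r) ∧ IsIntegral x}

/-- The dual lattice `Λ* = {x ∈ lin Λ : ⟨y, x⟩ ∈ ℤ for all y ∈ Λ}`. -/
def dualLattice {n : ℕ} (Λ : Set (Fin n → ℝ)) : Set (Fin n → ℝ) :=
  {x | x ∈ Submodule.span ℝ Λ ∧ ∀ y ∈ Λ, ∃ m : ℤ, dot y x = (m : ℝ)}

/-- Orthogonal projection onto the orthogonal complement of `v`. -/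
def projPerp {n : ℕ} (v : Fin n → ℝ) (x : Fin n → ℝ) : Fin n → ℝ :=
  x - (dot x v / dot v v) • v

section aux

variable {n k : ℕ}

lemma dot_self_pos {v : Fin n → ℝ} (hv : v ≠ 0) : 0 < dot v v := by
  have hex : ∃ m, v m ≠ 0 := by
    by_contra h; push_neg at h; exact hv (funext h)
  obtain ⟨m, hm⟩ := hex
  exact Finset.sum_pos' (fun j _ => mul_self_nonneg _)
    ⟨m, Finset.mem_univ m, mul_self_pos.2 hm⟩

lemma dot_add_left (x y v : Fin n → ℝ) : dot (x + y) v = dot x v + dot y v := by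
  simp [dot, add_mul, Finset.sum_add_distrib]

lemma dot_smul_left (c : ℝ) (x v : Fin n → ℝ) : dot (c • x) v = c * dot x v := by
  simp [dot, Finset.mul_sum, mul_assoc]

lemma projPerp_add (v x y : Fin n → ℝ) :
    projPerp v (x + y) = projPerp v x + projPerp v y := by
  unfold projPerp; rw [dot_add_left, add_div, add_smul]; abel

lemma projPerp_smul (v : Fin n → ℝ) (c : ℝ) (x : Fin n → ℝ) :
    projPerp v (c • x) = c • projPerp v x := by
  unfold projPerp; rw [dot_smul_left, mul_div_assoc, smul_sub, smul_smul]

lemma projPerp_zero (v : Fin n → ℝ) : projPerp v 0 = 0 := by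
  simp [projPerp, dot, Finset.sum_eq_zero]

lemma projPerp_sub (v x y : Fin n → ℝ) :
    projPerp v (x - y) = projPerp v x - projPerp v y := by
  have h : x - y = x + (-1 : ℝ) • y := by module
  rw [h, projPerp_add, projPerp_smul]; module

lemma projPerp_self {v : Fin n → ℝ} (hv : v ≠ 0) : projPerp v v = 0 := by
  unfold projPerp
  rw [div_self (ne_of_gt (dot_self_pos hv))]; simp

lemma projPerp_sum {ι : Type*} (v : Fin n → ℝ) (s : Finset ι) (f : ι → Fin n → ℝ) :
    projPerp v (∑ j ∈ s, f j) = ∑ j ∈ s, projPerp v (f j) := by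
  induction s using Finset.cons_induction with
  | empty => simp [projPerp_zero]
  | cons a s ha ih => rw [Finset.sum_cons, Finset.sum_cons, projPerp_add, ih]

lemma proj_li {r : Fin k → (Fin n → ℝ)} (hli : LinearIndependent ℝ r) (i : Fin k)
    (c : Fin k → ℝ) (hc : ∑ j, c j • projPerp (r i) (r j) = 0) :
    ∀ j, j ≠ i → c j = 0 := by
  have hri : r i ≠ 0 := hli.ne_zero i
  have hd : dot (r i) (r i) ≠ 0 := ne_of_gt (dot_self_pos hri)
  set a : Fin k → ℝ := fun j => dot (r j) (r i) / dot (r i) (r i) with ha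
  set S : ℝ := ∑ j, c j * a j with hS
  set g : Fin k → ℝ := fun j => c j - (if j = i then S else 0) with hg
  have hg0 : ∑ j, g j • r j = 0 := by
    have e1 : ∀ j, g j • r j = c j • projPerp (r i) (r j)
        + (c j * a j) • r i - (if j = i then S else 0) • r j := by
      intro j
      simp only [hg, sub_smul, ite_smul, zero_smul, projPerp, smul_sub, smul_smul, ha]
      abel
    calc ∑ j, g j • r j
        = ∑ j, c j • projPerp (r i) (r j) + ∑ j, (c j * a j) • r i
          - ∑ j, (if j = i then S else 0) • r j := by
          rw [← Finset.sum_add_distrib, ← Finset.sum_sub_distrib]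
          exact Finset.sum_congr rfl fun j _ => e1 j
      _ = 0 := by
          rw [hc, ← Finset.sum_smul, ← hS]
          simp [Finset.sum_ite_eq]
  intro j hj
  have := Fintype.linearIndependent_iff.1 hli g hg0 j
  simpa [hg, hj] using this

lemma integral_sub_zsmul {x y : Fin n → ℝ} (hx : IsIntegral x) (m : ℤ)
    (hy : IsIntegral y) : IsIntegral (x - (m : ℝ) • y) := by
  intro j
  obtain ⟨a, hax⟩ := hx j
  obtain ⟨b, hby⟩ := hy j
  refine ⟨a - m * b, ?_⟩
  simp only [Pi.sub_apply, Pi.smul_apply, smul_eq_mul, hax, hby]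
  push_cast
  ring

lemma par_finite (r : Fin k → (Fin n → ℝ)) : (par r).Finite := by
  classical
  set B : ℝ := ∑ j, ∑ m, |r j m| with hB
  set N : ℤ := ⌈B⌉ with hN
  have hBN : B ≤ (N : ℝ) := Int.le_ceil B
  have hsub : par r ⊆ (fun z : Fin n → ℤ => fun m => (z m : ℝ)) ''
      (Set.pi Set.univ fun _ : Fin n => Set.Icc (-N) N) := by
    rintro x ⟨⟨lam, hlam, hx⟩, hxint⟩
    choose z hz using hxint
    refine ⟨z, ?_, ?_⟩
    · intro m _
      have hx' : x m = ∑ j, lam j * r j m := by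
        rw [hx]; simp [Finset.sum_apply]
      have hxm : |x m| ≤ B := by
        calc |x m| ≤ ∑ j, |lam j * r j m| := by
              rw [hx']; exact Finset.abs_sum_le_sum_abs _ _
          _ ≤ ∑ j, ∑ m', |r j m'| := by
              refine Finset.sum_le_sum fun j _ => ?_
              have h1 : |lam j * r j m| ≤ |r j m| := by
                rw [abs_mul, abs_of_nonneg (hlam j).1]
                calc lam j * |r j m| ≤ 1 * |r j m| :=
                      mul_le_mul_of_nonneg_right (le_of_lt (hlam j).2) (abs_nonneg _)
                  _ = |r j m| := one_mul _
              exact h1.trans (Finset.single_le_sum (f := fun m' => |r j m'|)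
                (fun _ _ => abs_nonneg _) (Finset.mem_univ m))
      have hzm : |z m| ≤ N := by
        have : |(z m : ℝ)| ≤ (N : ℝ) := by rw [← hz m]; exact hxm.trans hBN
        rw [← Int.cast_abs] at this
        exact_mod_cast this
      exact Set.mem_Icc.2 (abs_le.1 hzm)
    · funext m; exact (hz m).symm
  exact Set.Finite.subset (Set.Finite.image _
    (Set.Finite.pi fun _ => Set.finite_Icc _ _)) hsub


lemma key {r : Fin k → (Fin n → ℝ)} (hint : ∀ i, IsIntegral (r i))
    (hli : LinearIndependent ℝ r) (i : Fin k) (y : Fin n → ℝ)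
    (hy : y ∈ parL (projPerp (r i) '' latticeOf r)
        (fun j : {j : Fin k // j ≠ i} => projPerp (r i) (r (j : Fin k)))) :
    ∃ x, x ∈ par r ∧ projPerp (r i) x = y := by
  classical
  obtain ⟨⟨lam, hlam, hyeq⟩, x, hxL, hxy⟩ := hy
  obtain ⟨μ, hμ⟩ := (Submodule.mem_span_range_iff_exists_fun ℝ).1 hxL.1
  have hri : r i ≠ 0 := hli.ne_zero i
  -- proj x as a full sum
  have hprojx : projPerp (r i) x = ∑ j, μ j • projPerp (r i) (r j) := by
    rw [← hμ, projPerp_sum]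
    exact Finset.sum_congr rfl fun j _ => projPerp_smul _ _ _
  -- extend lam to Fin k
  set lamext : Fin k → ℝ := fun j => if h : j = i then 0 else lam ⟨j, h⟩ with hlamext
  have hsubty : ∑ j ∈ Finset.univ.erase i,
        lamext j • projPerp (r i) (r j)
      = ∑ j : {j : Fin k // j ≠ i}, lamext (j : Fin k) • projPerp (r i) (r (j : Fin k)) :=
    Finset.sum_subtype _ (fun x => by simp) _
  have hyfull : y = ∑ j, lamext j • projPerp (r i) (r j) := by
    have herase : ∑ j ∈ Finset.univ.erase i, lamext j • projPerp (r i) (r j)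
        = ∑ j, lamext j • projPerp (r i) (r j) :=
      Finset.sum_erase _ (by simp [hlamext])
    rw [← herase, hsubty, hyeq]
    exact Finset.sum_congr rfl fun j _ => by simp [hlamext, j.2]
  -- coefficients agree off i
  have hcoef : ∀ j, j ≠ i → μ j = lamext j := by
    have h0 : ∑ j, (μ j - lamext j) • projPerp (r i) (r j) = 0 := by
      have : ∑ j, (μ j - lamext j) • projPerp (r i) (r j)
          = ∑ j, μ j • projPerp (r i) (r j) - ∑ j, lamext j • projPerp (r i) (r j) := by
        rw [← Finset.sum_sub_distrib]
        exact Finset.sum_congr rfl fun j _ => sub_smul _ _ _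
      rw [this, ← hprojx, ← hyfull, hxy, sub_self]
    intro j hj
    have := proj_li hli i _ h0 j hj
    linarith [this]
  -- the new coefficients
  set ν : Fin k → ℝ := fun j => if h : j = i then Int.fract (μ i) else lam ⟨j, h⟩ with hν
  have hμν : ∀ j, μ j - ν j = if j = i then (⌊μ i⌋ : ℝ) else 0 := by
    intro j
    by_cases hj : j = i
    · subst hj
      rw [if_pos rfl]
      have hv : ν j = Int.fract (μ j) := by rw [hν]; exact dif_pos rfl
      rw [hv]
      exact Int.self_sub_fract _
    · have h2 := hcoef j hj
      simp only [hlamext, dif_neg hj] at h2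
      simp only [hν, dif_neg hj, if_neg hj]
      rw [h2]; ring
  refine ⟨x - (⌊μ i⌋ : ℝ) • r i, ⟨⟨ν, ?_, ?_⟩, ?_⟩, ?_⟩
  · intro j
    by_cases hj : j = i
    · subst hj
      simp only [hν, dif_pos rfl]
      exact ⟨Int.fract_nonneg _, Int.fract_lt_one _⟩
    · simpa [hν, hj] using hlam ⟨j, hj⟩
  · have hdiff : ∑ j, μ j • r j - ∑ j, ν j • r j = (⌊μ i⌋ : ℝ) • r i := by
      rw [← Finset.sum_sub_distrib]
      have : ∀ j ∈ Finset.univ, (μ j • r j - ν j • r j)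
          = if j = i then (⌊μ i⌋ : ℝ) • r i else 0 := by
        intro j _
        rw [← sub_smul, hμν j]
        by_cases hj : j = i
        · subst hj; simp
        · simp [hj]
      rw [Finset.sum_congr rfl this, Finset.sum_ite_eq' Finset.univ i
        (fun _ => (⌊μ i⌋ : ℝ) • r i)]
      simp
    rw [← hμ, ← hdiff]; abel
  · exact integral_sub_zsmul hxL.2 _ (hint i)
  · rw [projPerp_sub, projPerp_smul, projPerp_self hri, smul_zero, sub_zero, hxy]

end aux

/-- the multiplicity (number of lattice points in the half-open
parallelepiped) of the projected cone, with respect to the projected lattice,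
is at most the multiplicity of the original cone. -/
theorem stmt_9 {n k : ℕ} (r : Fin k → (Fin n → ℝ))
    (hint : ∀ i, IsIntegral (r i)) (hli : LinearIndependent ℝ r) (i : Fin k) :
    (parL (projPerp (r i) '' latticeOf r)
        (fun j : {j : Fin k // j ≠ i} => projPerp (r i) (r (j : Fin k)))).ncard
      ≤ (par r).ncard := by
  classical
  set A := parL (projPerp (r i) '' latticeOf r)
      (fun j : {j : Fin k // j ≠ i} => projPerp (r i) (r (j : Fin k))) with hA
  have key' : ∀ y ∈ A, ∃ x, x ∈ par r ∧ projPerp (r i) x = y :=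
    fun y hy => key hint hli i y hy
  set f : (Fin n → ℝ) → (Fin n → ℝ) :=
    fun y => if h : y ∈ A then Classical.choose (key' y h) else 0 with hf
  have hmaps : ∀ y ∈ A, f y ∈ par r := by
    intro y hy
    simp only [hf, dif_pos hy]
    exact (Classical.choose_spec (key' y hy)).1
  have hproj : ∀ y ∈ A, projPerp (r i) (f y) = y := by
    intro y hy
    simp only [hf, dif_pos hy]
    exact (Classical.choose_spec (key' y hy)).2
  have hinj : Set.InjOn f A := by
    intro y1 h1 y2 h2 he
    rw [← hproj y1 h1, ← hproj y2 h2, he]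
  exact Set.ncard_le_ncard_of_injOn f hmaps hinj (par_finite r)

end ICRPaper
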